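/- Let R be a linear subspace (Submodule ℝ) of (Fin m → ℝ) × (Fin n → ℝ), and define its twisted orthogonal complement R^c = {(x*,y*) | ∀ (x,y) ∈ R, ⟪x*,x⟫ = ⟪y*,y⟫}. Then the adjoint of the convex indicator bifunction of R is, up to sign, the indicator of R^c: for all x* : Fin m → ℝ and y* : Fin n → ℝ, ⨅ x, ⨅ y, ([(x,y) ∈ R] + ((⟪x*,x⟫ − ⟪y*,y⟫ : ℝ) : EReal)) = (if (x*,y*) ∈ R^c then (0 : EReal) else −∞). -/
import Mathlib


open Matrix Classical

/-- The convex indicator of a proposition: `0` if it holds, `+∞` otherwise. -/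
noncomputable def ind (P : Prop) : EReal := if P then 0 else ⊤

/-- The adjoint of the convex indicator bifunction of a linear relation `R` is,
up to sign, the indicator of the twisted orthogonal complement `Rᶜ`. -/
theorem adjoint_indicator_linear_relation (m n : ℕ)
    (R : Submodule ℝ ((Fin m → ℝ) × (Fin n → ℝ)))
    (xs : Fin m → ℝ) (ys : Fin n → ℝ) :
    (⨅ x : Fin m → ℝ, ⨅ y : Fin n → ℝ,
        (ind ((x, y) ∈ R) + ((xs ⬝ᵥ x - ys ⬝ᵥ y : ℝ) : EReal))) =
      (if (∀ x : Fin m → ℝ, ∀ y : Fin n → ℝ, (x, y) ∈ R → xs ⬝ᵥ x = ys ⬝ᵥ y)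
        then (0 : EReal) else ⊥) := by
  split_ifs with h
  · apply le_antisymm
    · calc (⨅ x : Fin m → ℝ, ⨅ y : Fin n → ℝ,
          (ind ((x, y) ∈ R) + ((xs ⬝ᵥ x - ys ⬝ᵥ y : ℝ) : EReal)))
          ≤ ind (((0 : Fin m → ℝ), (0 : Fin n → ℝ)) ∈ R)
            + ((xs ⬝ᵥ (0 : Fin m → ℝ) - ys ⬝ᵥ (0 : Fin n → ℝ) : ℝ) : EReal) :=
            iInf_le_of_le 0 (iInf_le _ 0)
        _ = 0 := by
            have : ((0 : Fin m → ℝ), (0 : Fin n → ℝ)) ∈ R := R.zero_mem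
            simp [ind, this]
    · refine le_iInf fun x => le_iInf fun y => ?_
      by_cases hxy : (x, y) ∈ R
      · have := h x y hxy
        simp [ind, hxy, this]
      · simp only [ind, hxy, if_false]
        rw [EReal.top_add_of_ne_bot (by exact_mod_cast EReal.coe_ne_bot _)]
        exact le_top
  · rw [EReal.eq_bot_iff_forall_lt]
    intro M
    push_neg at h
    obtain ⟨x, y, hxy, hne⟩ := h
    set c : ℝ := xs ⬝ᵥ x - ys ⬝ᵥ y with hc
    have hc0 : c ≠ 0 := sub_ne_zero.mpr hne
    set t : ℝ := (M - 1) / c with ht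
    have hmem : ((t • x, t • y) : (Fin m → ℝ) × (Fin n → ℝ)) ∈ R := by
      have := R.smul_mem t hxy
      simpa [Prod.smul_mk] using this
    have hval : xs ⬝ᵥ (t • x) - ys ⬝ᵥ (t • y) = M - 1 := by
      rw [dotProduct_smul, dotProduct_smul, smul_eq_mul, smul_eq_mul, ← mul_sub, ← hc, ht,
        div_mul_cancel₀ _ hc0]
    calc (⨅ x : Fin m → ℝ, ⨅ y : Fin n → ℝ,
          (ind ((x, y) ∈ R) + ((xs ⬝ᵥ x - ys ⬝ᵥ y : ℝ) : EReal)))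
        ≤ ind ((t • x, t • y) ∈ R) + ((xs ⬝ᵥ (t • x) - ys ⬝ᵥ (t • y) : ℝ) : EReal) :=
          iInf_le_of_le _ (iInf_le _ _)
      _ = ((M - 1 : ℝ) : EReal) := by rw [hval]; simp [ind, hmem]
      _ < (M : EReal) := by exact_mod_cast sub_one_lt M
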